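/- Let R be a commutative ring, A an R-algebra, and R' a faithfully flat commutative R-algebra. If R' ⊗_R A is of finite expansion over R', then A is of finite expansion over R. -/

import Mathlib

open TensorProduct

/-- Over a faithfully flat algebra, `1 ⊗ₜ m = 0` implies `m = 0`. -/
lemma MyFF.eq_zero_of_one_tmul_eq_zero {R R' M : Type*} [CommRing R] [CommRing R'] [Algebra R R']
    [Module.FaithfullyFlat R R'] [AddCommGroup M] [Module R M] {m : M}
    (hm : (1 : R') ⊗ₜ[R] m = 0) : m = 0 := by
  have h : LinearMap.lTensor R' (LinearMap.toSpanSingleton R M m) = 0 := by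
    apply TensorProduct.ext'
    intro r' r
    have : (LinearMap.lTensor R' (LinearMap.toSpanSingleton R M m)) (r' ⊗ₜ[R] r)
        = r' ⊗ₜ[R] (r • m) := rfl
    rw [this, tmul_smul]
    have h2 : r' ⊗ₜ[R] m = r' • ((1 : R') ⊗ₜ[R] m) := by
      rw [smul_tmul', smul_eq_mul, mul_one]
    rw [h2, hm, smul_zero, smul_zero]
    rfl
  have := (Module.FaithfullyFlat.zero_iff_lTensor_zero R R'
    (LinearMap.toSpanSingleton R M m)).2 h
  simpa using congrArg (fun f => f 1) this

/-- Descent of submodule membership along a faithfully flat base change. -/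
lemma MyFF.mem_of_one_tmul_mem {R R' M : Type*} [CommRing R] [CommRing R'] [Algebra R R']
    [Module.FaithfullyFlat R R'] [AddCommGroup M] [Module R M] (N : Submodule R M) {x : M}
    (hx : (1 : R') ⊗ₜ[R] x ∈ LinearMap.range (LinearMap.lTensor R' N.subtype)) : x ∈ N := by
  have h1 : LinearMap.lTensor R' N.mkQ ((1 : R') ⊗ₜ[R] x) = 0 := by
    obtain ⟨y, hy⟩ := hx
    rw [← hy, ← LinearMap.comp_apply, ← LinearMap.lTensor_comp]
    have h0 : N.mkQ.comp N.subtype = 0 := by ext z; simp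
    rw [h0, LinearMap.lTensor_zero, LinearMap.zero_apply]
  have h2 : (1 : R') ⊗ₜ[R] (N.mkQ x) = 0 := by simpa using h1
  have := MyFF.eq_zero_of_one_tmul_eq_zero (R := R) (R' := R') h2
  rwa [← Submodule.Quotient.mk_eq_zero]

lemma MyFF.exists_finset {R A R' : Type*} [CommRing R] [CommRing A] [CommRing R'] [Algebra R A]
    [Algebra R R'] (x : R' ⊗[R] A) :
    ∃ t : Finset A, x ∈ Submodule.span R' ((fun a : A => (1 : R') ⊗ₜ[R] a) '' ↑t) := by
  classical
  induction x with
  | zero => exact ⟨∅, zero_mem _⟩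
  | tmul r' a =>
      refine ⟨{a}, ?_⟩
      have : r' ⊗ₜ[R] a = r' • ((1 : R') ⊗ₜ[R] a) := by
        rw [smul_tmul', smul_eq_mul, mul_one]
      rw [this]
      exact Submodule.smul_mem _ _ (Submodule.subset_span ⟨a, by simp, rfl⟩)
  | add x y hx hy =>
      obtain ⟨t1, h1⟩ := hx
      obtain ⟨t2, h2⟩ := hy
      refine ⟨t1 ∪ t2, add_mem ?_ ?_⟩
      · exact Submodule.span_mono (Set.image_mono (by simp [Finset.coe_union])) h1
      · exact Submodule.span_mono (Set.image_mono (by simp [Finset.coe_union])) h2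

/-- An `R`-algebra `A` is of *finite expansion* if it is integral over a finitely
generated subalgebra, i.e. there is a finite set of quasi-generators. -/
def Algebra.FiniteExpansion (R A : Type*) [CommRing R] [CommRing A] [Algebra R A] : Prop :=
  ∃ s : Finset A, Algebra.IsIntegral (Algebra.adjoin R (s : Set A)) A

set_option maxHeartbeats 1000000 in
open TensorProduct in
/-- Finite expansion descends along faithfully flat base change. -/
theorem Algebra.FiniteExpansion.of_faithfullyFlat (R A R' : Type*) [CommRing R] [CommRing A]
    [CommRing R'] [Algebra R A] [Algebra R R'] [Module.FaithfullyFlat R R']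
    (h : Algebra.FiniteExpansion R' (R' ⊗[R] A)) : Algebra.FiniteExpansion R A := by
  classical
  obtain ⟨s, hs⟩ := h
  choose f hf using fun x : R' ⊗[R] A => MyFF.exists_finset (R := R) (A := A) (R' := R') x
  set t : Finset A := s.sup f with ht
  refine ⟨t, ⟨fun a => ?_⟩⟩
  set B := Algebra.adjoin R (t : Set A) with hB
  set D := Algebra.adjoin R' ((fun b : A => (1 : R') ⊗ₜ[R] b) '' (t : Set A)) with hD
  have hsD : Algebra.adjoin R' (s : Set (R' ⊗[R] A)) ≤ D := by
    rw [Algebra.adjoin_le_iff]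
    intro x hxs
    have h2 : ((fun a : A => (1 : R') ⊗ₜ[R] a) '' ↑(f x)) ⊆ (D : Set (R' ⊗[R] A)) := by
      rintro y ⟨b, hb, rfl⟩
      have hsub : f x ⊆ t := Finset.le_sup hxs
      exact Algebra.subset_adjoin ⟨b, Finset.mem_coe.2 (hsub hb), rfl⟩
    have hle : Submodule.span R' ((fun a : A => (1 : R') ⊗ₜ[R] a) '' ↑(f x))
        ≤ Subalgebra.toSubmodule D := Submodule.span_le.2 h2
    exact hle (hf x)
  -- integrality of 1 ⊗ a
  obtain ⟨p, pmonic, hp⟩ := hs.isIntegral ((1 : R') ⊗ₜ[R] a)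
  set q : Polynomial (Algebra.adjoin R' (s : Set (R' ⊗[R] A))) := p * Polynomial.X with hq
  have hqroot : Polynomial.eval₂ (algebraMap _ (R' ⊗[R] A)) ((1 : R') ⊗ₜ[R] a) q = 0 := by
    rw [hq, Polynomial.eval₂_mul, hp, zero_mul]
  set n := p.natDegree + 1 with hn
  have hnpos : 0 < n := Nat.succ_pos _
  have hdeg : q.natDegree < n + 1 := by
    have h1 : q.natDegree ≤ p.natDegree + 1 := by
      refine le_trans Polynomial.natDegree_mul_le ?_
      exact Nat.add_le_add_left Polynomial.natDegree_X_le _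
    omega
  have hcoeff : q.coeff n = 1 := by
    rw [hq, hn, Polynomial.coeff_mul_X, pmonic.coeff_natDegree]
  -- the submodule over B
  set N : Submodule B A := Submodule.span B (((Finset.range n).image (a ^ ·) : Finset A)) with hNdef
  have hgen : ∀ i < n, a ^ i ∈ N := fun i hi =>
    Submodule.subset_span (by simp; exact ⟨i, hi, rfl⟩)
  set Nr : Submodule R A := N.restrictScalars R with hNr
  set ι : R' ⊗[R] Nr →ₗ[R'] R' ⊗[R] A := LinearMap.baseChange R' Nr.subtype with hι
  set W : Submodule R' (R' ⊗[R] A) := LinearMap.range ι with hW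
  have hmemW : ∀ m ∈ N, ∀ r' : R', r' ⊗ₜ[R] m ∈ W := by
    intro m hm r'
    exact ⟨r' ⊗ₜ[R] (⟨m, hm⟩ : Nr), by simp [hι]⟩
  have hWmul : ∀ d ∈ D, ∀ w ∈ W, d * w ∈ W := by
    intro d hd
    induction hd using Algebra.adjoin_induction with
    | mem x hx =>
        obtain ⟨b, hb, rfl⟩ := hx
        have hbB : b ∈ B := Algebra.subset_adjoin hb
        intro w hw
        obtain ⟨y, rfl⟩ := hw
        induction y with
        | zero => simpa using zero_mem W
        | tmul r' m =>
            have : ((1 : R') ⊗ₜ[R] b) * ι (r' ⊗ₜ[R] m) = r' ⊗ₜ[R] (b * (m : A)) := by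
              simp [hι, Algebra.TensorProduct.tmul_mul_tmul]
            rw [this]
            refine hmemW _ ?_ r'
            have : b * (m : A) = (⟨b, hbB⟩ : B) • (m : A) := rfl
            rw [this]
            exact N.smul_mem _ m.2
        | add y z hy hz =>
            rw [map_add, mul_add]
            exact add_mem (hy) (hz)
    | algebraMap r' =>
        intro w hw
        rw [← Algebra.smul_def]
        exact W.smul_mem r' hw
    | add x y hx hy hx' hy' =>
        intro w hw
        rw [add_mul]
        exact add_mem (hx' w hw) (hy' w hw)
    | mul x y hx hy hx' hy' =>
        intro w hw
        rw [mul_assoc]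
        exact hx' _ (hy' w hw)
  -- the key relation
  have hrel : (1 : R') ⊗ₜ[R] (a ^ n) ∈ W := by
    have heq : ((1 : R') ⊗ₜ[R] a) ^ n =
        - ∑ i ∈ Finset.range n,
          (algebraMap (Algebra.adjoin R' (s : Set (R' ⊗[R] A))) (R' ⊗[R] A) (q.coeff i)) *
            ((1 : R') ⊗ₜ[R] a) ^ i := by
      have := Polynomial.eval₂_eq_sum_range' (algebraMap _ (R' ⊗[R] A)) hdeg ((1 : R') ⊗ₜ[R] a)
      rw [hqroot] at this
      rw [Finset.sum_range_succ, hcoeff, map_one, one_mul] at this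
      linear_combination -this
    have hpow : ((1 : R') ⊗ₜ[R] a) ^ n = (1 : R') ⊗ₜ[R] (a ^ n) := by
      rw [Algebra.TensorProduct.tmul_pow, one_pow]
    rw [← hpow, heq]
    refine neg_mem (Submodule.sum_mem _ fun i hi => ?_)
    refine hWmul _ (hsD (q.coeff i).2) _ ?_
    rw [Algebra.TensorProduct.tmul_pow, one_pow]
    exact hmemW _ (hgen i (Finset.mem_range.1 hi)) 1
  -- descend
  have han : a ^ n ∈ N := by
    have : (1 : R') ⊗ₜ[R] (a ^ n) ∈ LinearMap.range (LinearMap.lTensor R' Nr.subtype) := by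
      obtain ⟨y, hy⟩ := hrel
      exact ⟨y, by rw [← hy]; rfl⟩
    exact MyFF.mem_of_one_tmul_mem Nr this
  -- closure of N under multiplication by a
  have hclosed : ∀ x ∈ N, a * x ∈ N := by
    intro x hx
    induction hx using Submodule.span_induction with
    | mem y hy =>
        simp only [Finset.coe_image, Set.mem_image, Finset.mem_coe, Finset.mem_range] at hy
        obtain ⟨i, hi, rfl⟩ := hy
        have hmul : a * a ^ i = a ^ (i + 1) := by ring
        rw [hmul]
        rcases lt_or_eq_of_le (Nat.succ_le_of_lt hi) with h' | h'
        · exact hgen _ h'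
        · rw [show i + 1 = n from h']; exact han
    | zero => simpa using zero_mem N
    | add y z _ _ hy hz => rw [mul_add]; exact add_mem hy hz
    | smul b y _ hy => rw [mul_smul_comm]; exact N.smul_mem b hy
  have hallpow : ∀ k, a ^ k ∈ N := by
    intro k
    induction k with
    | zero => simpa using hgen 0 hnpos
    | succ k ihk =>
        have hmul : a ^ (k + 1) = a * a ^ k := by ring
        rw [hmul]; exact hclosed _ ihk
  -- conclude integrality
  refine IsIntegral.of_mem_of_fg (Algebra.adjoin B {a}) ?_ a (Algebra.subset_adjoin rfl)
  have hle : Subalgebra.toSubmodule (Algebra.adjoin B {a}) ≤ N := by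
    rw [Algebra.adjoin_eq_span]
    refine Submodule.span_le.2 ?_
    intro x hx
    obtain ⟨k, rfl⟩ := Submonoid.mem_closure_singleton.1 hx
    exact hallpow k
  have hge : N ≤ Subalgebra.toSubmodule (Algebra.adjoin B {a}) := by
    refine Submodule.span_le.2 ?_
    intro x hx
    simp only [Finset.coe_image, Set.mem_image, Finset.mem_coe, Finset.mem_range] at hx
    obtain ⟨i, hi, rfl⟩ := hx
    exact Subalgebra.pow_mem (Algebra.adjoin B {a}) (Algebra.subset_adjoin rfl) i
  have : Subalgebra.toSubmodule (Algebra.adjoin B {a}) = N := le_antisymm hle hge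
  rw [this]
  exact Submodule.fg_span (Set.toFinite _)
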